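/- Let α, β be nonnegative reals with α² + β² = 1. Then for every binary tree t, ∑_{z} α^{2(leaves(z) − 1)} · β^{2·b(t,z)} = 1, where the sum ranges over all rooted subtrees z of t. -/
import Mathlib


/-- Finite ordered rooted binary trees. -/
inductive BTree where
  | leaf : BTree
  | node : BTree → BTree → BTree
deriving DecidableEq

/-- The number of leaves of a binary tree. -/
def BTree.leaves : BTree → ℕ
  | .leaf => 1
  | .node l r => l.leaves + r.leaves

/-- The finite set of all rooted subtrees of a binary tree: `leaf` is a rooted subtree of
every tree, and `node z₁ z₂` is a rooted subtree of `node l r` iff `z₁` is a rooted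
subtree of `l` and `z₂` is a rooted subtree of `r`. -/
def BTree.subtrees : BTree → Finset BTree
  | .leaf => {BTree.leaf}
  | .node l r =>
      insert BTree.leaf ((l.subtrees ×ˢ r.subtrees).image fun p => BTree.node p.1 p.2)

/-- `bfun t z` is the number of leaves of the rooted subtree `z` that are internal
vertices of `t`. -/
def bfun : BTree → BTree → ℕ
  | BTree.leaf, BTree.leaf => 0
  | BTree.node _ _, BTree.leaf => 1
  | BTree.leaf, BTree.node _ _ => 0
  | BTree.node l r, BTree.node z₁ z₂ => bfun l z₁ + bfun r z₂


lemma BTree.one_le_leaves (t : BTree) : 1 ≤ t.leaves := by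
  induction t with
  | leaf => simp [BTree.leaves]
  | node l r hl hr => simp [BTree.leaves]; omega

/-- Let `α, β` be nonnegative reals with `α² + β² = 1`. Then for every
binary tree `t`, `∑_z α^(2(leaves z − 1)) · β^(2 b(t,z)) = 1`, the sum ranging over all
rooted subtrees `z` of `t`. -/
theorem stmt9 (α β : ℝ) (hα : 0 ≤ α) (hβ : 0 ≤ β) (h : α ^ 2 + β ^ 2 = 1) (t : BTree) :
    ∑ z ∈ t.subtrees, α ^ (2 * (z.leaves - 1)) * β ^ (2 * bfun t z) = 1 := by
  induction t with
  | leaf =>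
    simp [BTree.subtrees, BTree.leaves, bfun]
  | node l r hl hr =>
    have hnotmem : BTree.leaf ∉ (l.subtrees ×ˢ r.subtrees).image
        (fun p => BTree.node p.1 p.2) := by
      simp
    rw [BTree.subtrees, Finset.sum_insert hnotmem, Finset.sum_image (by
      rintro ⟨a,b⟩ _ ⟨c,d⟩ _ h
      simpa using h)]
    rw [Finset.sum_product]
    have key : ∀ z₁ ∈ l.subtrees, ∀ z₂ ∈ r.subtrees,
        α ^ (2 * ((BTree.node z₁ z₂).leaves - 1)) * β ^ (2 * bfun (BTree.node l r) (BTree.node z₁ z₂))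
        = α ^ 2 * ((α ^ (2 * (z₁.leaves - 1)) * β ^ (2 * bfun l z₁)) *
            (α ^ (2 * (z₂.leaves - 1)) * β ^ (2 * bfun r z₂))) := by
      intro z₁ _ z₂ _
      have h1 := z₁.one_le_leaves
      have h2 := z₂.one_le_leaves
      have : 2 * ((BTree.node z₁ z₂).leaves - 1) = 2 + (2 * (z₁.leaves - 1) + 2 * (z₂.leaves - 1)) := by
        simp [BTree.leaves]; omega
      rw [this, bfun]
      ring_nf
    rw [Finset.sum_congr rfl (fun z₁ hz₁ => Finset.sum_congr rfl (fun z₂ hz₂ => key z₁ hz₁ z₂ hz₂))]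
    simp only [← Finset.mul_sum, ← Finset.sum_mul]
    rw [hl, hr]
    simp [BTree.leaves, bfun]
    linarith
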